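/- Zak transform of a function of positive type in a semidirect product: suppose G = H ⋊ K with H abelian, α ∈ Ĥ, f ∈ L²(K) a unit vector, π = Ind_H^G α realized on L²(K) by (π(hx)f)(y) = (y·α)(h) f(x⁻¹y) for h ∈ H, x, y ∈ K, and g(w) = ⟨f, π(w)f⟩ for w ∈ G. Then for all β ∈ Ĥ and x ∈ K, (Z_r g)(β)(x) = |H| ∑_{y ∈ K, y·α = β} f(xy) conj(f(y)). -/
import Mathlib


open scoped BigOperators

lemma char_orth' {H : Type*} [CommGroup H] [Fintype H] [DecidableEq (H →* Circle)]
    (χ β : H →* Circle) :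
    ∑ h : H, ((β h : ℂ) * (starRingEnd ℂ) (χ h : ℂ)) =
      if χ = β then (Fintype.card H : ℂ) else 0 := by
  have key : ∀ h : H, (β h : ℂ) * (starRingEnd ℂ) (χ h : ℂ) = ((β h * (χ h)⁻¹ : Circle) : ℂ) := by
    intro h; rw [← Circle.coe_inv_eq_conj]; push_cast; ring
  simp only [key]
  by_cases hc : χ = β
  · subst hc; simp [Finset.card_univ]
  · rw [if_neg hc]
    obtain ⟨h0, hh0⟩ : ∃ h0, χ h0 ≠ β h0 := by
      by_contra hall; push_neg at hall; exact hc (MonoidHom.ext hall)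
    set c : H → ℂ := fun h => ((β h * (χ h)⁻¹ : Circle) : ℂ) with hcdef
    have hmul : ∀ a b : H, c (a * b) = c a * c b := by
      intro a b; simp [hcdef, map_mul, mul_inv]; push_cast; ring
    have hshift : ∑ h : H, c (h0 * h) = ∑ h : H, c h :=
      Fintype.sum_equiv (Equiv.mulLeft h0) _ _ (fun h => rfl)
    have : c h0 * ∑ h : H, c h = ∑ h : H, c h := by
      rw [Finset.mul_sum]; rw [← hshift]; exact Finset.sum_congr rfl fun h _ => (hmul h0 h).symm
    have hc0 : c h0 ≠ 1 := by
      simp only [hcdef]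
      rw [Ne, Circle.coe_eq_one, mul_inv_eq_one]
      exact fun h => hh0 h.symm
    have := sub_eq_zero.mpr this
    rw [← sub_one_mul] at this
    rcases mul_eq_zero.mp this with h | h
    · exact absurd (by linear_combination h) hc0
    · exact h

/-- Zak transform of a function of positive type in a semidirect product `G = H ⋊ K`:
if `π = Ind_H^G α` is realized on `L²(K)` by `(π (h x) f)(y) = (y⋅α)(h) f(x⁻¹ y)` with
`(y⋅α)(h) = α (φ y⁻¹ h)`, and `g w = ⟪f, π w f⟫` (linear in the first slot), then
`(Z_r g)(β)(x) = |H| ∑_{y ∈ K, y⋅α = β} f (x y) conj (f y)`. -/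
theorem zak_posType_semidirect {H K : Type*} [CommGroup H] [Fintype H] [Group K] [Fintype K]
    [DecidableEq (H →* Circle)]
    (φ : K →* MulAut H) (α : H →* Circle) (f : K → ℂ) (hf : ∑ y : K, ‖f y‖ ^ 2 = 1)
    (π : (H ⋊[φ] K) → (K → ℂ) → (K → ℂ))
    (hπ : ∀ (w : H ⋊[φ] K) (u : K → ℂ) (y : K),
      π w u y = (α ((φ y⁻¹) w.left) : ℂ) * u (w.right⁻¹ * y))
    (g : (H ⋊[φ] K) → ℂ)
    (hg : ∀ w, g w = ∑ y : K, f y * (starRingEnd ℂ) (π w f y))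
    (β : H →* Circle) (x : K) :
    ∑ h : H, g (SemidirectProduct.inr x * SemidirectProduct.inl h) * (β h : ℂ) =
      (Fintype.card H : ℂ) *
        ∑ y ∈ Finset.univ.filter
            (fun y : K => α.comp (φ y⁻¹).toMonoidHom = β),
          f (x * y) * (starRingEnd ℂ) (f y) := by
  have step1 : ∀ h : H,
      g (SemidirectProduct.inr x * SemidirectProduct.inl h) * (β h : ℂ) =
      ∑ y : K, (f y * (starRingEnd ℂ) (f (x⁻¹ * y))) *
        ((β h : ℂ) * (starRingEnd ℂ) ((α.comp (φ (y⁻¹ * x)).toMonoidHom h : ℂ))) := by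
    intro h
    rw [hg, Finset.sum_mul]
    refine Finset.sum_congr rfl fun y _ => ?_
    rw [hπ]
    simp only [SemidirectProduct.mul_left, SemidirectProduct.mul_right,
      SemidirectProduct.left_inl, SemidirectProduct.right_inl,
      SemidirectProduct.left_inr, SemidirectProduct.right_inr, mul_one, one_mul, map_one]
    have : (φ y⁻¹) ((φ x) h) = (φ (y⁻¹ * x)) h := by rw [map_mul]; rfl
    rw [this]
    simp only [MonoidHom.comp_apply, MulEquiv.coe_toMonoidHom, map_mul]
    ring
  simp only [step1]
  rw [Finset.sum_comm]
  have step2 : ∀ y : K,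
      (∑ h : H, (f y * (starRingEnd ℂ) (f (x⁻¹ * y))) *
        ((β h : ℂ) * (starRingEnd ℂ) ((α.comp (φ (y⁻¹ * x)).toMonoidHom h : ℂ)))) =
      (f y * (starRingEnd ℂ) (f (x⁻¹ * y))) *
        (if α.comp (φ (y⁻¹ * x)).toMonoidHom = β then (Fintype.card H : ℂ) else 0) := by
    intro y
    rw [← Finset.mul_sum, char_orth']
  simp only [step2]
  rw [Finset.mul_sum]
  rw [← Fintype.sum_equiv (Equiv.mulLeft x)
    (fun y => (Fintype.card H : ℂ) *
      (if α.comp (φ y⁻¹).toMonoidHom = β then f (x * y) * (starRingEnd ℂ) (f y) else 0))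
    _ ?_]
  · simp only [mul_ite, mul_zero, ← Finset.sum_filter, Finset.mul_sum]
  · intro y
    simp only [Equiv.coe_mulLeft, mul_inv_rev, inv_mul_cancel_right, inv_mul_cancel_left,
      mul_ite, mul_zero]
    split <;> ring
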